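/- Let G be a bipartite graph (with parts P and L) in which every cycle has length at least 2m for some m ≥ 3. Extend G to a graph G' by adding a new path of length m−1 between two vertices x and y of G that lie at distance at least m+1 in G (or in different components), where the internal path vertices are new and alternate between the two parts, each new vertex being adjacent only to its neighbors on the path. Then every cycle of G' has length at least 2m. -/

import Mathlib

open SimpleGraph

section Aux

variable {V : Type*} {G : SimpleGraph V}

lemma aux_support_getElem {u v : V} (p : G.Walk u v) :
    ∀ (i : ℕ) (hi : i < p.support.length), p.support[i] = p.getVert i := by
  induction p with
  | nil =>
    intro i hi
    simp only [Walk.support_nil, List.length_singleton] at hi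
    interval_cases i
    simp
  | cons h q ih =>
    intro i hi
    cases i with
    | zero => simp
    | succ i =>
      simp only [Walk.support_cons, List.length_cons] at hi
      simpa [Walk.getVert_cons_succ] using ih i (by omega)

lemma aux_core {v : V} {W : G.Walk v v} (hW : W.support.tail.Nodup)
    {i j : ℕ} (h0 : 0 < i) (h1 : i < j) (h2 : j ≤ W.length) :
    W.getVert i ≠ W.getVert j := by
  intro heq
  have hsl : W.support.length = W.length + 1 := W.length_support
  have htl : W.support.tail.length = W.length := by
    rw [List.length_tail, hsl]
    omega
  have e1 : W.support.tail[i-1]'(by omega) = W.getVert i := by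
    rw [List.getElem_tail, aux_support_getElem W]
    congr 1
    omega
  have e2 : W.support.tail[j-1]'(by omega) = W.getVert j := by
    rw [List.getElem_tail, aux_support_getElem W]
    congr 1
    omega
  have := (hW.getElem_inj_iff).mp (e1.trans (heq.trans e2.symm))
  omega

lemma aux_ne {v : V} {W : G.Walk v v} (hW : W.support.tail.Nodup)
    {i j : ℕ} (h1 : i < j) (h2 : j ≤ W.length) (h3 : ¬(i = 0 ∧ j = W.length)) :
    W.getVert i ≠ W.getVert j := by
  rcases Nat.eq_zero_or_pos i with rfl | hi
  · have hj : j < W.length := lt_of_le_of_ne h2 (fun h => h3 ⟨rfl, h⟩)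
    have hne : W.getVert j ≠ W.getVert W.length := aux_core hW h1 hj le_rfl
    rw [Walk.getVert_length] at hne
    rw [Walk.getVert_zero]
    exact hne.symm
  · exact aux_core hW hi h1 h2

lemma aux_getVert_drop {u v : V} (p : G.Walk u v) :
    ∀ (n i : ℕ), (p.drop n).getVert i = p.getVert (n + i) := by
  induction p with
  | nil => intro n i; cases n <;> simp [Walk.drop, Walk.getVert_of_length_le]
  | cons h q ih =>
    intro n i
    cases n with
    | zero => simp [Walk.drop]
    | succ n =>
      have h1 : ((Walk.cons h q).drop (n+1)).getVert i = (q.drop n).getVert i := by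
        rw [show (Walk.cons h q).drop (n+1)
            = (q.drop n).copy (Walk.getVert_cons_succ _ h).symm rfl from rfl]
        simp
      rw [h1, ih n i, show n + 1 + i = (n + i) + 1 from by omega, Walk.getVert_cons_succ]

lemma aux_length_drop {u v : V} (p : G.Walk u v) :
    ∀ (n : ℕ), (p.drop n).length = p.length - n := by
  induction p with
  | nil => intro n; cases n <;> simp [Walk.drop]
  | cons h q ih =>
    intro n
    cases n with
    | zero => simp [Walk.drop]
    | succ n => simpa [Walk.drop] using ih n

lemma aux_mem_rotate [DecidableEq V] {v u : V} {c : G.Walk v v} (h : u ∈ c.support) {z : V} :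
    z ∈ (c.rotate _ h).support ↔ z ∈ c.support := by
  unfold Walk.rotate
  rw [Walk.mem_support_append_iff, or_comm, ← Walk.mem_support_append_iff, Walk.take_spec]

lemma aux_length_rotate [DecidableEq V] {v u : V} {c : G.Walk v v} (h : u ∈ c.support) :
    (c.rotate _ h).length = c.length := by
  have h1 := congrArg Walk.length (c.take_spec h)
  rw [Walk.length_append] at h1
  unfold Walk.rotate
  rw [Walk.length_append]
  omega

lemma aux_isCycle_reverse {v : V} {W : G.Walk v v} (hW : W.IsCycle) : W.reverse.IsCycle := by
  refine ⟨⟨Walk.IsTrail.reverse W hW.isCircuit.isTrail, ?_⟩, ?_⟩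
  · intro h
    apply hW.ne_nil
    rw [← Walk.reverse_reverse W, h, Walk.reverse_nil]
  · have h1 : W.reverse.support = v :: W.reverse.support.tail := W.reverse.support_eq_cons
    have h2 : W.support = v :: W.support.tail := W.support_eq_cons
    have hperm : W.reverse.support.Perm W.support := by
      rw [Walk.support_reverse]; exact List.reverse_perm _
    rw [h1, h2] at hperm
    exact (hperm.cons_inv.nodup_iff).mpr hW.support_nodup

lemma aux_two_nbrs {v : V} {W : G.Walk v v} (hW : W.IsCycle) {z : V} (hz : z ∈ W.support) :
    ∃ b1 b2, b1 ≠ b2 ∧ G.Adj z b1 ∧ G.Adj z b2 ∧ b1 ∈ W.support ∧ b2 ∈ W.support := by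
  have h3 := hW.three_le_length
  have hmem : ∀ t : ℕ, t ≤ W.length → W.getVert t ∈ W.support := fun t ht =>
    Walk.mem_support_iff_exists_getVert.mpr ⟨t, rfl, ht⟩
  obtain ⟨i, hgi, hil⟩ := Walk.mem_support_iff_exists_getVert.mp hz
  by_cases hmid : 0 < i ∧ i < W.length
  · have ha1 : G.Adj z (W.getVert (i-1)) := by
      have := W.adj_getVert_succ (i := i-1) (by omega)
      rw [show i-1+1 = i by omega, hgi] at this
      exact this.symm
    have ha2 : G.Adj z (W.getVert (i+1)) := by
      have := W.adj_getVert_succ (i := i) hmid.2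
      rwa [hgi] at this
    exact ⟨_, _, aux_ne hW.support_nodup (by omega) (by omega) (by omega), ha1, ha2,
      hmem _ (by omega), hmem _ (by omega)⟩
  · have hzv : z = v := by
      rcases not_and_or.mp hmid with h | h
      · have hi0 : i = 0 := by omega
        rw [← hgi, hi0, Walk.getVert_zero]
      · have hiL : i = W.length := by omega
        rw [← hgi, hiL, Walk.getVert_length]
    subst hzv
    have ha1 : G.Adj z (W.getVert 1) := by
      have := W.adj_getVert_succ (i := 0) (by omega)
      rwa [Walk.getVert_zero] at this
    have ha2 : G.Adj z (W.getVert (W.length - 1)) := by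
      have := W.adj_getVert_succ (i := W.length - 1) (by omega)
      rw [show W.length - 1 + 1 = W.length by omega, Walk.getVert_length] at this
      exact this.symm
    exact ⟨_, _, aux_ne hW.support_nodup (by omega) (by omega) (by omega), ha1, ha2,
      hmem _ (by omega), hmem _ (by omega)⟩

lemma aux_lift {V' W' : Type*} {G : SimpleGraph V'} {H : SimpleGraph W'} (f : G →g H)
    (hinj : Function.Injective f) (hrefl : ∀ u v : V', H.Adj (f u) (f v) → G.Adj u v) :
    ∀ {s t : W'} (w : H.Walk s t), (∀ z ∈ w.support, ∃ z', z = f z') →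
      ∀ {p q : V'} (hs : s = f p) (ht : t = f q),
      ∃ w0 : G.Walk p q, w.copy hs ht = w0.map f := by
  intro s t w
  induction w with
  | nil =>
    intro _ p q hs ht
    subst hs
    have hpq : p = q := hinj ht
    subst hpq
    exact ⟨Walk.nil, rfl⟩
  | @cons s b t h w ih =>
    intro hsup p q hs ht
    subst hs
    subst ht
    obtain ⟨b', hb'⟩ := hsup b (by simp)
    subst hb'
    obtain ⟨w0, hw0⟩ := ih (fun z hz => hsup z (by simp [hz])) rfl rfl
    rw [Walk.copy_rfl_rfl] at hw0
    refine ⟨Walk.cons (hrefl _ _ h) w0, ?_⟩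
    rw [Walk.copy_rfl_rfl, Walk.map_cons, hw0]

end Aux


/-- Adding a new path of length `m-1` (with `m-2` new internal
vertices, alternating between the two parts) between two vertices `x, y` of a
bipartite graph `G` without cycles of length `< 2m` that are at distance at
least `m+1` (or in different components) yields a graph all of whose cycles
have length at least `2m`. -/
theorem stmt_0 {V : Type*} (G : SimpleGraph V) (m : ℕ) (hm : 3 ≤ m)
    (c : V → Bool) (hbip : ∀ u v, G.Adj u v → c u ≠ c v)
    (hgirth : ∀ (a : V) (w : G.Walk a a), w.IsCycle → 2 * m ≤ w.length)
    (x y : V)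
    (hfar : ¬ G.Reachable x y ∨ m + 1 ≤ G.dist x y)
    (G' : SimpleGraph (V ⊕ Fin (m - 2)))
    (hG'1 : ∀ u v : V, G'.Adj (Sum.inl u) (Sum.inl v) ↔ G.Adj u v)
    (hG'2 : ∀ (u : V) (k : Fin (m - 2)),
      G'.Adj (Sum.inl u) (Sum.inr k) ↔
        ((u = x ∧ (k : ℕ) = 0) ∨ (u = y ∧ (k : ℕ) = m - 3)))
    (hG'3 : ∀ k l : Fin (m - 2),
      G'.Adj (Sum.inr k) (Sum.inr l) ↔ ((k : ℕ) + 1 = l ∨ (l : ℕ) + 1 = k))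
    (c' : V ⊕ Fin (m - 2) → Bool)
    (hc' : ∀ v : V, c' (Sum.inl v) = c v)
    (hbip' : ∀ a b, G'.Adj a b → c' a ≠ c' b) :
    ∀ (a : V ⊕ Fin (m - 2)) (w : G'.Walk a a), w.IsCycle → 2 * m ≤ w.length := by
  classical
  intro a w hcyc
  have hmn : 0 < m - 2 := by omega
  have hxy : x ≠ y := by
    rintro rfl
    rcases hfar with h | h
    · exact h (Reachable.refl x)
    · rw [SimpleGraph.dist_self] at h; omega
  let fhom : G →g G' := ⟨Sum.inl, fun {a b} h => (hG'1 a b).2 h⟩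
  have hinj : Function.Injective (fhom : V → V ⊕ Fin (m - 2)) := fun a b h =>
    Sum.inl_injective h
  have hrefl : ∀ u v : V, G'.Adj (fhom u) (fhom v) → G.Adj u v := fun u v h =>
    (hG'1 u v).1 h
  -- characterization of neighbors of path-interior vertices
  have hnbr : ∀ (k : Fin (m - 2)) (b : V ⊕ Fin (m - 2)), G'.Adj (Sum.inr k) b →
      (b = Sum.inl x ∧ (k : ℕ) = 0) ∨ (b = Sum.inl y ∧ (k : ℕ) = m - 3) ∨
      (∃ l : Fin (m - 2), b = Sum.inr l ∧ ((k : ℕ) + 1 = l ∨ (l : ℕ) + 1 = k)) := by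
    intro k b hb
    cases b with
    | inl u =>
      rcases (hG'2 u k).1 hb.symm with ⟨rfl, hk⟩ | ⟨rfl, hk⟩
      · exact Or.inl ⟨rfl, hk⟩
      · exact Or.inr (Or.inl ⟨rfl, hk⟩)
    | inr l => exact Or.inr (Or.inr ⟨l, rfl, (hG'3 k l).1 hb⟩)
  have hdownstep : ∀ (k : Fin (m - 2)) (b1 b2 : V ⊕ Fin (m - 2)),
      G'.Adj (Sum.inr k) b1 → G'.Adj (Sum.inr k) b2 → b1 ≠ b2 → 0 < (k : ℕ) →
      ∃ l : Fin (m - 2), (l : ℕ) + 1 = (k : ℕ) ∧ (Sum.inr l = b1 ∨ Sum.inr l = b2) := by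
    intro k b1 b2 h1 h2 hne hk
    have hclass : ∀ b, G'.Adj (Sum.inr k) b →
        (∃ l : Fin (m - 2), (l : ℕ) + 1 = (k : ℕ) ∧ b = Sum.inr l) ∨
        ((k : ℕ) = m - 3 ∧ b = Sum.inl y) ∨
        (∃ l : Fin (m - 2), (k : ℕ) + 1 = (l : ℕ) ∧ b = Sum.inr l) := by
      intro b hb
      rcases hnbr k b hb with ⟨hb', hk0⟩ | ⟨hb', hk0⟩ | ⟨l, hb', hl | hl⟩
      · omega
      · exact Or.inr (Or.inl ⟨hk0, hb'⟩)
      · exact Or.inr (Or.inr ⟨l, hl, hb'⟩)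
      · exact Or.inl ⟨l, hl, hb'⟩
    rcases hclass b1 h1 with ⟨l, hl, hb⟩ | hc1
    · exact ⟨l, hl, Or.inl hb.symm⟩
    rcases hclass b2 h2 with ⟨l, hl, hb⟩ | hc2
    · exact ⟨l, hl, Or.inr hb.symm⟩
    exfalso
    apply hne
    rcases hc1 with ⟨hk1, hb1⟩ | ⟨l1, hl1, hb1⟩ <;>
      rcases hc2 with ⟨hk2, hb2⟩ | ⟨l2, hl2, hb2⟩
    · rw [hb1, hb2]
    · exact absurd l2.isLt (by omega)
    · exact absurd l1.isLt (by omega)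
    · rw [hb1, hb2]
      congr 1
      exact Fin.ext (by omega)
  have hxstep : ∀ (b1 b2 : V ⊕ Fin (m - 2)),
      G'.Adj (Sum.inr (⟨0, hmn⟩ : Fin (m - 2))) b1 →
      G'.Adj (Sum.inr (⟨0, hmn⟩ : Fin (m - 2))) b2 → b1 ≠ b2 →
      Sum.inl x = b1 ∨ Sum.inl x = b2 := by
    intro b1 b2 h1 h2 hne
    have hclass : ∀ b, G'.Adj (Sum.inr (⟨0, hmn⟩ : Fin (m - 2))) b → b ≠ Sum.inl x →
        ((m : ℕ) - 3 = 0 ∧ b = Sum.inl y) ∨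
        (∃ l : Fin (m - 2), (l : ℕ) = 1 ∧ b = Sum.inr l) := by
      intro b hb hbx
      rcases hnbr _ b hb with ⟨hb', _⟩ | ⟨hb', hk0⟩ | ⟨l, hb', hl | hl⟩
      · exact absurd hb' hbx
      · exact Or.inl ⟨by simpa using hk0.symm, hb'⟩
      · exact Or.inr ⟨l, by simpa using hl.symm, hb'⟩
      · simp at hl
    by_contra hcon
    push_neg at hcon
    apply hne
    rcases hclass b1 h1 (fun h => hcon.1 h.symm) with ⟨hk1, hb1⟩ | ⟨l1, hl1, hb1⟩ <;>
      rcases hclass b2 h2 (fun h => hcon.2 h.symm) with ⟨hk2, hb2⟩ | ⟨l2, hl2, hb2⟩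
    · rw [hb1, hb2]
    · exact absurd l2.isLt (by omega)
    · exact absurd l1.isLt (by omega)
    · rw [hb1, hb2]
      congr 1
      exact Fin.ext (by omega)
  -- the main estimate for a cycle through the new path, normalized to start at x
  -- and go directly into the path
  have final : ∀ (U : G'.Walk (Sum.inl x) (Sum.inl x)), U.IsCycle →
      U.getVert 1 = Sum.inr (⟨0, hmn⟩ : Fin (m - 2)) → 2 * m ≤ U.length := by
    intro U hUc hg1
    have hL3 := hUc.three_le_length
    have hnd := hUc.support_nodup
    have hxpos : ∀ j, j ≤ U.length → U.getVert j = Sum.inl x → j = 0 ∨ j = U.length := by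
      intro j hj hgj
      by_contra hcon
      push_neg at hcon
      exact aux_ne hnd (i := 0) (j := j) (by omega) hj (by omega)
        (by rw [Walk.getVert_zero, hgj])
    have chain : ∀ j : ℕ, ∀ hj : j < m - 2, U.getVert (j + 1) = Sum.inr ⟨j, hj⟩ := by
      intro j
      induction j using Nat.strong_induction_on with
      | _ j ih =>
        intro hj
        rcases Nat.eq_zero_or_pos j with rfl | hjpos
        · exact hg1
        · obtain ⟨j', rfl⟩ : ∃ j', j = j' + 1 := ⟨j - 1, by omega⟩
          have hprev : U.getVert (j' + 1) = Sum.inr ⟨j', by omega⟩ := ih j' (by omega) (by omega)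
          have hjL : j' + 1 < U.length := by
            by_contra hcon
            have h' := U.getVert_of_length_le (i := j' + 1) (by omega)
            rw [hprev] at h'
            simp at h'
          have hadj : G'.Adj (Sum.inr (⟨j', by omega⟩ : Fin (m - 2))) (U.getVert (j' + 2)) := by
            have := U.adj_getVert_succ (i := j' + 1) hjL
            rwa [hprev] at this
          rcases hnbr _ _ hadj with ⟨hbx, hk0⟩ | ⟨hby, hktop⟩ | ⟨l, hbl, hl | hl⟩
          · simp only at hk0
            rcases hxpos (j' + 2) (by omega) hbx with h | h <;> omega
          · simp only at hktop
            omega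
          · rw [hbl]
            congr 1
            exact Fin.ext (by simpa using hl.symm)
          · exfalso
            simp only at hl
            have hl' : U.getVert ((l : ℕ) + 1) = Sum.inr l := by
              have := ih (l : ℕ) (by omega) l.isLt
              rw [this]
            exact aux_ne hnd (i := (l : ℕ) + 1) (j := j' + 2) (by omega) (by omega)
              (by omega) (hl'.trans hbl.symm)
    have hchainN : U.getVert (m - 2) = Sum.inr ⟨m - 3, by omega⟩ := by
      have := chain (m - 3) (by omega)
      rwa [show m - 3 + 1 = m - 2 by omega] at this
    have hNL : m - 2 < U.length := by
      by_contra hcon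
      have h' := U.getVert_of_length_le (i := m - 2) (by omega)
      rw [hchainN] at h'
      simp at h'
    have hadjN : G'.Adj (Sum.inr (⟨m - 3, by omega⟩ : Fin (m - 2))) (U.getVert (m - 1)) := by
      have := U.adj_getVert_succ (i := m - 2) hNL
      rw [hchainN, show m - 2 + 1 = m - 1 by omega] at this
      exact this
    have hy : U.getVert (m - 1) = Sum.inl y := by
      rcases hnbr _ _ hadjN with ⟨hbx, hk0⟩ | ⟨hby, _⟩ | ⟨l, hbl, hl | hl⟩
      · simp only at hk0
        rcases hxpos (m - 1) (by omega) hbx with h | h <;> omega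
      · exact hby
      · simp only at hl
        exact absurd l.isLt (by omega)
      · exfalso
        simp only at hl
        have hl' : U.getVert ((l : ℕ) + 1) = Sum.inr l := by
          have := chain (l : ℕ) l.isLt
          rw [this]
        exact aux_ne hnd (i := (l : ℕ) + 1) (j := m - 1) (by omega) (by omega)
          (by omega) (hl'.trans hbl.symm)
    have hyL : m - 1 < U.length := by
      rcases Nat.lt_or_ge (m - 1) U.length with h | h
      · exact h
      · exfalso
        have hme : m - 1 = U.length := by omega
        rw [hme, Walk.getVert_length] at hy
        exact hxy (Sum.inl.inj hy)
    have hdsup : ∀ z ∈ (U.drop (m - 1)).support, ∃ z', z = Sum.inl z' := by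
      intro z hz
      obtain ⟨t, hgt, htl⟩ := Walk.mem_support_iff_exists_getVert.mp hz
      rw [aux_getVert_drop] at hgt
      rcases z with z' | k
      · exact ⟨z', rfl⟩
      exfalso
      have hk' : U.getVert ((k : ℕ) + 1) = Sum.inr k := by
        have := chain (k : ℕ) k.isLt
        rw [this]
      have hle : m - 1 + t ≤ U.length := by
        by_contra hcon
        have h' := U.getVert_of_length_le (i := m - 1 + t) (by omega)
        rw [h'] at hgt
        simp at hgt
      have hk2 := k.isLt
      exact aux_ne hnd (i := (k : ℕ) + 1) (j := m - 1 + t) (by omega) hle (by omega)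
        (hk'.trans hgt.symm)
    obtain ⟨w0, hw0⟩ := aux_lift fhom hinj hrefl (U.drop (m - 1)) hdsup
      (p := y) (q := x) hy rfl
    have hw0len : w0.length = U.length - (m - 1) := by
      have h' := congrArg Walk.length hw0
      rw [Walk.length_copy, Walk.length_map] at h'
      rw [← h', aux_length_drop]
    have hreach : G.Reachable x y := w0.reachable.symm
    have hdist : m + 1 ≤ G.dist x y := by
      rcases hfar with h | h
      · exact absurd hreach h
      · exact h
    have hdle : G.dist x y ≤ U.length - (m - 1) := by
      rw [SimpleGraph.dist_comm]
      exact hw0len ▸ SimpleGraph.dist_le w0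
    omega
  rcases Classical.em (∃ k, Sum.inr k ∈ w.support) with hincl | hincl
  · obtain ⟨k0, h0⟩ := hincl
    have hWc : (w.rotate _ h0).IsCycle := hcyc.rotate h0
    have hWlen : (w.rotate _ h0).length = w.length := aux_length_rotate h0
    have hdown : ∀ t : ℕ, ∀ k : Fin (m - 2), (k : ℕ) ≤ t → Sum.inr k ∈ (w.rotate _ h0).support →
        Sum.inr (⟨0, hmn⟩ : Fin (m - 2)) ∈ (w.rotate _ h0).support := by
      intro t
      induction t with
      | zero =>
        intro k hk hks
        have hk' : k = ⟨0, hmn⟩ := Fin.ext (show (k : ℕ) = 0 by omega)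
        rwa [← hk']
      | succ t ih =>
        intro k hk hks
        by_cases hk0 : (k : ℕ) = 0
        · have hk' : k = ⟨0, hmn⟩ := Fin.ext (show (k : ℕ) = 0 from hk0)
          rwa [← hk']
        · obtain ⟨b1, b2, hne, h1, h2, hm1, hm2⟩ := aux_two_nbrs hWc hks
          obtain ⟨l, hl, hch⟩ := hdownstep k b1 b2 h1 h2 hne (by omega)
          have hls : Sum.inr l ∈ (w.rotate _ h0).support := by
            rcases hch with h | h
            · rwa [h]
            · rwa [h]
          exact ih l (by omega) hls
    have h0s : Sum.inr (⟨0, hmn⟩ : Fin (m - 2)) ∈ (w.rotate _ h0).support :=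
      hdown (k0 : ℕ) k0 le_rfl (w.rotate _ h0).start_mem_support
    have hxs : Sum.inl x ∈ (w.rotate _ h0).support := by
      obtain ⟨b1, b2, hne, h1, h2, hm1, hm2⟩ := aux_two_nbrs hWc h0s
      rcases hxstep b1 b2 h1 h2 hne with h | h
      · rwa [← h] at hm1
      · rwa [← h] at hm2
    have hUc : ((w.rotate _ h0).rotate _ hxs).IsCycle := hWc.rotate hxs
    have hULen : ((w.rotate _ h0).rotate _ hxs).length = (w.rotate _ h0).length :=
      aux_length_rotate hxs
    set U := (w.rotate _ h0).rotate _ hxs with hUdef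
    have hL3 := hUc.three_le_length
    obtain ⟨i, hgi, hil⟩ := Walk.mem_support_iff_exists_getVert.mp
      ((aux_mem_rotate hxs).mpr h0s)
    rw [← hUdef] at hgi hil
    have hi0 : i ≠ 0 := by
      intro h
      rw [h, Walk.getVert_zero] at hgi
      simp at hgi
    have hiL : i ≠ U.length := by
      intro h
      rw [h, Walk.getVert_length] at hgi
      simp at hgi
    have ha1 : G'.Adj (Sum.inr (⟨0, hmn⟩ : Fin (m - 2))) (U.getVert (i - 1)) := by
      have := U.adj_getVert_succ (i := i - 1) (by omega)
      rw [show i - 1 + 1 = i by omega, hgi] at this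
      exact this.symm
    have ha2 : G'.Adj (Sum.inr (⟨0, hmn⟩ : Fin (m - 2))) (U.getVert (i + 1)) := by
      have := U.adj_getVert_succ (i := i) (by omega)
      rwa [hgi] at this
    have hne : U.getVert (i - 1) ≠ U.getVert (i + 1) :=
      aux_ne hUc.support_nodup (by omega) (by omega) (by omega)
    rcases hxstep _ _ ha1 ha2 hne with hx1 | hx1
    · have hi1 : i = 1 := by
        by_contra hcon
        exact aux_ne hUc.support_nodup (i := 0) (j := i - 1) (by omega) (by omega)
          (by omega) (by rw [Walk.getVert_zero, ← hx1])
      rw [hi1] at hgi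
      have := final U hUc hgi
      omega
    · have hi1 : i + 1 = U.length := by
        by_contra hcon
        exact aux_ne hUc.support_nodup (i := 0) (j := i + 1) (by omega) (by omega)
          (by omega) (by rw [Walk.getVert_zero, ← hx1])
      have hrc : U.reverse.IsCycle := aux_isCycle_reverse hUc
      have hr1 : U.reverse.getVert 1 = Sum.inr (⟨0, hmn⟩ : Fin (m - 2)) := by
        rw [Walk.getVert_reverse, show U.length - 1 = i by omega]
        exact hgi
      have := final U.reverse hrc hr1
      rw [Walk.length_reverse] at this
      omega
  · push_neg at hincl
    have hall : ∀ z ∈ w.support, ∃ z', z = Sum.inl z' := by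
      intro z hz
      rcases z with u | k
      · exact ⟨u, rfl⟩
      · exact absurd hz (hincl k)
    obtain ⟨a₀, ha⟩ := hall a w.start_mem_support
    subst ha
    obtain ⟨w0, hw0⟩ := aux_lift fhom hinj hrefl w hall rfl rfl
    rw [Walk.copy_rfl_rfl] at hw0
    subst hw0
    rw [Walk.map_isCycle_iff_of_injective hinj] at hcyc
    rw [Walk.length_map]
    exact hgirth a₀ w0 hcyc
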